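/- Define N(n) = |LE(n) ∩ ((n−1)!, n!]| for each positive integer n. Then for every integer n ≥ 2, N(n) ≤ ⌈(n−2)!/n⌉ + N(n−1). -/

import Mathlib

/-- The number of linear extensions of a finite poset `P`: the number of
order-preserving bijections from `P` to the chain `Fin |P|`. -/
noncomputable def extNum (P : Type*) [instF : Fintype P] [instO : PartialOrder P] : ℕ :=
  Nat.card {f : P ≃ Fin (Fintype.card P) // ∀ x y : P, x ≤ y → f x ≤ f y}

/-- `LEset n` is the set of positive integers arising as the number of linear
extensions of some poset with exactly `n` elements. -/
def LEset (n : ℕ) : Set ℕ :=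
  {m | 0 < m ∧ ∃ r : PartialOrder (Fin n), extNum (Fin n) (instO := r) = m}

/-- `N(n) = |LE(n) ∩ ((n-1)!, n!]|`. -/
noncomputable def bigN (n : ℕ) : ℕ :=
  (LEset n ∩ Set.Ioc (Nat.factorial (n - 1)) (Nat.factorial n)).ncard

set_option linter.unusedSectionVars false

section Aux

/-- The comparability relation of a poset. -/
def Cmp (P : Type*) [PartialOrder P] (a b : P) : Prop := a ≤ b ∨ b ≤ a

variable {P : Type*} [Fintype P] [PartialOrder P]

/-- Every finite poset has a linear extension. -/
lemma exists_linExt (P : Type*) [Fintype P] [PartialOrder P] :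
    Nonempty {f : P ≃ Fin (Fintype.card P) // ∀ x y : P, x ≤ y → f x ≤ f y} := by
  classical
  letI : Fintype (LinearExtension P) := ‹Fintype P›
  have hc : Fintype.card (LinearExtension P) = Fintype.card P := rfl
  let e := monoEquivOfFin (LinearExtension P) hc
  refine ⟨⟨((Equiv.refl P : P ≃ LinearExtension P).trans e.symm.toEquiv), ?_⟩⟩
  intro x y hxy
  exact e.symm.monotone (toLinearExtension.monotone hxy)

lemma extNum_pos (P : Type*) [Fintype P] [PartialOrder P] : 0 < extNum P := by
  have := exists_linExt P
  exact Nat.card_pos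

lemma extNum_eq_card {n : ℕ} (h : Fintype.card P = n) :
    extNum P = Nat.card {f : P ≃ Fin n // ∀ x y : P, x ≤ y → f x ≤ f y} := by
  subst h; rfl

lemma extNum_le_fact (P : Type*) [Fintype P] [PartialOrder P] :
    extNum P ≤ (Fintype.card P).factorial := by
  classical
  obtain ⟨L0⟩ := exists_linExt P
  calc extNum P ≤ Nat.card (P ≃ Fin (Fintype.card P)) :=
        Nat.card_le_card_of_injective Subtype.val Subtype.val_injective
    _ = (Fintype.card P).factorial := by
        rw [Nat.card_eq_fintype_card, Fintype.card_equiv L0.1]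

lemma extNum_congr {P Q : Type*} [Fintype P] [PartialOrder P] [Fintype Q] [PartialOrder Q]
    (e : P ≃o Q) : extNum P = extNum Q := by
  have hc : Fintype.card P = Fintype.card Q := Fintype.card_congr e.toEquiv
  apply Nat.card_congr
  refine Equiv.mk
    (fun f => ⟨(e.symm.toEquiv.trans f.1).trans (finCongr hc), ?_⟩)
    (fun g => ⟨(e.toEquiv.trans g.1).trans (finCongr hc.symm), ?_⟩) ?_ ?_
  · intro x y hxy
    simp only [Equiv.trans_apply, finCongr_apply, Fin.le_def, Fin.coe_cast]
    exact f.2 _ _ (e.symm.monotone hxy)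
  · intro x y hxy
    simp only [Equiv.trans_apply, finCongr_apply, Fin.le_def, Fin.coe_cast]
    exact g.2 _ _ (e.monotone hxy)
  · intro f; apply Subtype.ext; apply Equiv.ext; intro x; simp
  · intro g; apply Subtype.ext; apply Equiv.ext; intro x; simp

/-- transport a finite poset to `Fin n` -/
lemma transport {n : ℕ} (Q : Type*) [Fintype Q] [PartialOrder Q] (h : Fintype.card Q = n) :
    ∃ r : PartialOrder (Fin n), extNum (Fin n) (instO := r) = extNum Q := by
  have g : Fin n ≃ Q := (Fintype.equivFinOfCardEq h).symm
  let r : PartialOrder (Fin n) := PartialOrder.lift g g.injective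
  refine ⟨r, ?_⟩
  have e : @OrderIso (Fin n) Q (@Preorder.toLE _ (@PartialOrder.toPreorder _ r)) _ :=
    { toEquiv := g, map_rel_iff' := Iff.rfl }
  exact @extNum_congr (Fin n) Q _ r _ _ e

/-- If `P` is connected and both `L` and `x ↦ L x + k` are linear extensions, `k = 0`. -/
lemma rot_zero {n : ℕ} (hconn : ∀ x y : P, Relation.ReflTransGen (Cmp P) x y)
    (L : P ≃ Fin n) (hL : ∀ x y : P, x ≤ y → L x ≤ L y)
    (k : Fin n)
    (hL' : ∀ x y : P, x ≤ y → L x + k ≤ L y + k) : (k : ℕ) = 0 := by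
  by_contra hk
  have hkn : (k : ℕ) < n := k.isLt
  have hk1 : 1 ≤ (k : ℕ) := Nat.one_le_iff_ne_zero.mpr hk
  have hnpos : 0 < n := lt_of_le_of_lt (Nat.zero_le _) hkn
  set S : Set P := {x | n - (k : ℕ) ≤ ((L x) : ℕ)} with hS
  have edge : ∀ a b : P, a ∈ S → b ∉ S → ¬ Cmp P a b := by
    intro a b ha hb hcmp
    have hva : n - (k : ℕ) ≤ ((L a) : ℕ) := ha
    have hvb : ((L b) : ℕ) < n - (k : ℕ) := not_le.mp hb
    have hia := (L a).isLt
    have hib := (L b).isLt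
    rcases hcmp with h | h
    · have := hL a b h
      rw [Fin.le_def] at this
      omega
    · have h2 := hL' b a h
      rw [Fin.le_def, Fin.val_add, Fin.val_add] at h2
      have e1 : ((L b) : ℕ) + (k : ℕ) < n := by omega
      rw [Nat.mod_eq_of_lt e1] at h2
      have e4 : (((L a) : ℕ) + (k : ℕ)) % n = ((L a) : ℕ) + (k : ℕ) - n := by
        rw [Nat.mod_eq_sub_mod (by omega), Nat.mod_eq_of_lt (by omega)]
      omega
  have hx0 : L.symm ⟨n - 1, by omega⟩ ∈ S := by
    simp only [hS, Set.mem_setOf_eq, Equiv.apply_symm_apply]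
    omega
  have hy0 : L.symm ⟨0, hnpos⟩ ∉ S := by
    simp only [hS, Set.mem_setOf_eq, Equiv.apply_symm_apply]
    omega
  have key : ∀ x y : P, Relation.ReflTransGen (Cmp P) x y → x ∈ S → y ∉ S → False := by
    intro x y h
    induction h with
    | refl => intro h1 h2; exact h2 h1
    | @tail b c hab hbc ih =>
      intro hx hyc
      by_cases hb : b ∈ S
      · exact edge _ _ hb hyc hbc
      · exact ih hx hb
  exact key _ _ (hconn _ _) hx0 hy0

/-- connected posets: `n * e(P) ≤ n!` -/
lemma conn_bound (P : Type*) [Fintype P] [PartialOrder P]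
    (hconn : ∀ x y : P, Relation.ReflTransGen (Cmp P) x y) :
    Fintype.card P * Nat.card {f : P ≃ Fin (Fintype.card P) // ∀ x y : P, x ≤ y → f x ≤ f y}
      ≤ (Fintype.card P).factorial := by
  rcases Nat.eq_zero_or_pos (Fintype.card P) with h0 | hpos
  · rw [h0]; simp
  haveI : NeZero (Fintype.card P) := ⟨by omega⟩
  set n := Fintype.card P with hn
  have hinj : Function.Injective
      (fun p : Fin n × {f : P ≃ Fin n // ∀ x y : P, x ≤ y → f x ≤ f y} =>
        p.2.1.trans (Equiv.addRight p.1)) := by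
    rintro ⟨k, f, hf⟩ ⟨k', f', hf'⟩ h
    simp only [Equiv.ext_iff, Equiv.trans_apply, Equiv.coe_addRight] at h
    have hrel : ∀ x : P, f' x = f x + (k - k') := by
      intro x
      have h1 := h x
      have : f' x + k' + (k - k') = f x + k + (k - k') := by rw [h1]
      calc f' x = f' x + k' + (k - k') - k := by abel
        _ = f x + k + (k - k') - k := by rw [this]
        _ = f x + (k - k') := by abel
    have hz : ((k - k' : Fin n) : ℕ) = 0 := by
      apply rot_zero hconn f hf (k - k')
      intro x y hxy
      rw [← hrel x, ← hrel y]
      exact hf' x y hxy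
    have hkk : k = k' := by
      have h0 : k - k' = 0 := Fin.ext hz
      exact sub_eq_zero.mp h0
    subst hkk
    have hff : f = f' := by
      apply Equiv.ext
      intro x
      exact add_right_cancel (h x)
    simp [hff]
  obtain ⟨L0⟩ := exists_linExt P
  calc n * Nat.card {f : P ≃ Fin n // ∀ x y : P, x ≤ y → f x ≤ f y}
      = Nat.card (Fin n × {f : P ≃ Fin n // ∀ x y : P, x ≤ y → f x ≤ f y}) := by
        rw [Nat.card_prod, Nat.card_eq_fintype_card (α := Fin n), Fintype.card_fin]
    _ ≤ Nat.card (P ≃ Fin n) := Nat.card_le_card_of_injective _ hinj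
    _ = n.factorial := by
        classical
        rw [Nat.card_eq_fintype_card, Fintype.card_equiv L0.1]

open Finset in
/-- the image of a subset under a linear extension -/
noncomputable def imgS {n : ℕ} (L : P ≃ Fin n) (S : Set P) [DecidablePred (· ∈ S)] :
    Finset (Fin n) := Finset.image (fun s : S => L s.1) Finset.univ

lemma card_imgS {n : ℕ} (L : P ≃ Fin n) (S : Set P) [DecidablePred (· ∈ S)] :
    (imgS L S).card = Fintype.card S := by
  rw [imgS, Finset.card_image_of_injective _ (fun a b h => Subtype.val_injective (L.injective h)),
    Finset.card_univ]

lemma mem_imgS {n : ℕ} (L : P ≃ Fin n) (S : Set P) [DecidablePred (· ∈ S)] (s : S) :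
    L s.1 ∈ imgS L S := by
  simp [imgS]

/-- The restriction of a linear extension to `S`, renormalized to `Fin |S|`. -/
noncomputable def restrictExt {n : ℕ} (L : P ≃ Fin n) (S : Set P) [DecidablePred (· ∈ S)] :
    (S : Type _) ≃ Fin (Fintype.card S) :=
  (Equiv.ofBijective (fun s : S => (⟨L s.1, mem_imgS L S s⟩ : (imgS L S : Set (Fin n))))
    ⟨fun a b h => Subtype.val_injective (L.injective (congrArg Subtype.val h)),
     by rintro ⟨i, hi⟩
        simp only [imgS, Finset.mem_coe, Finset.mem_image, Finset.mem_univ, true_and] at hi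
        obtain ⟨s, hs⟩ := hi
        exact ⟨s, Subtype.ext hs⟩⟩).trans
    ((imgS L S).orderIsoOfFin (card_imgS L S)).symm.toEquiv

lemma restrictExt_apply {n : ℕ} (L : P ≃ Fin n) (S : Set P) [DecidablePred (· ∈ S)] (s : S) :
    ((imgS L S).orderIsoOfFin (card_imgS L S) (restrictExt L S s) : Fin n) = L s.1 := by
  simp [restrictExt]
  rfl

lemma restrictExt_mono {n : ℕ} (L : P ≃ Fin n) (S : Set P) [DecidablePred (· ∈ S)]
    (hL : ∀ x y : P, x ≤ y → L x ≤ L y) (s t : S) (hst : s ≤ t) :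
    restrictExt L S s ≤ restrictExt L S t := by
  have h1 : L s.1 ≤ L t.1 := hL _ _ hst
  simp only [restrictExt, Equiv.trans_apply]
  exact ((imgS L S).orderIsoOfFin (card_imgS L S)).symm.monotone (by exact h1)

open Finset in
lemma split_bound (S : Set P) [DecidablePred (· ∈ S)]
    (hcl : ∀ x y : P, x ≤ y → (x ∈ S ↔ y ∈ S)) :
    extNum P ≤ (Fintype.card P).choose (Fintype.card S) *
      (extNum S * extNum (Sᶜ : Set P)) := by
  classical
  set n := Fintype.card P with hn
  set q := Fintype.card S with hq
  have key : extNum P ≤ Nat.card ({A : Finset (Fin n) // A.card = q} ×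
      {f : (S : Type _) ≃ Fin (Fintype.card S) // ∀ x y : (S : Type _), x ≤ y → f x ≤ f y} ×
      {f : ((Sᶜ : Set P) : Type _) ≃ Fin (Fintype.card (Sᶜ : Set P)) //
        ∀ x y : ((Sᶜ : Set P) : Type _), x ≤ y → f x ≤ f y}) := by
    apply Nat.card_le_card_of_injective
      (f := fun Lp => ⟨⟨imgS Lp.1 S, card_imgS Lp.1 S⟩,
        ⟨restrictExt Lp.1 S, restrictExt_mono Lp.1 S Lp.2⟩,
        ⟨restrictExt Lp.1 (Sᶜ : Set P), restrictExt_mono Lp.1 (Sᶜ : Set P)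
          (fun x y h => Lp.2 x y h)⟩⟩)
    rintro ⟨L, hL⟩ ⟨L', hL'⟩ h
    simp only [Prod.mk.injEq, Subtype.mk.injEq] at h
    obtain ⟨hA, hfS, hfC⟩ := h
    have hACompl : imgS L (Sᶜ : Set P) = imgS L' (Sᶜ : Set P) := by
      have h1 : ∀ (M : P ≃ Fin n), imgS M (Sᶜ : Set P) = (imgS M S)ᶜ := by
        intro M
        ext i
        simp only [imgS, Finset.mem_image, Finset.mem_univ, true_and, Finset.mem_compl]
        constructor
        · rintro ⟨s, rfl⟩ ⟨t, ht⟩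
          exact s.2 (by rw [← M.injective ht]; exact t.2)
        · intro hi
          refine ⟨⟨M.symm i, fun hmem => hi ⟨⟨M.symm i, hmem⟩, by simp⟩⟩, by simp⟩
      rw [h1, h1, hA]
    have hLeq : ∀ x : P, L x = L' x := by
      intro x
      by_cases hx : x ∈ S
      · have e1 := restrictExt_apply L S ⟨x, hx⟩
        have e2 := restrictExt_apply L' S ⟨x, hx⟩
        rw [Finset.coe_orderIsoOfFin_apply] at e1 e2
        simp only [hA] at e1
        rw [← e1, ← e2, hfS]
      · have e1 := restrictExt_apply L (Sᶜ : Set P) ⟨x, hx⟩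
        have e2 := restrictExt_apply L' (Sᶜ : Set P) ⟨x, hx⟩
        rw [Finset.coe_orderIsoOfFin_apply] at e1 e2
        simp only [hACompl] at e1
        rw [← e1, ← e2, hfC]
    exact Subtype.ext (Equiv.ext hLeq)
  calc extNum P ≤ _ := key
    _ = (Fintype.card P).choose (Fintype.card S) * (extNum S * extNum (Sᶜ : Set P)) := by
      rw [Nat.card_prod, Nat.card_prod,
        Nat.card_eq_fintype_card (α := {A : Finset (Fin n) // A.card = q}),
        Fintype.card_finset_len, Fintype.card_fin]
      rfl

section iso2
variable {P : Type*} [Fintype P] [PartialOrder P] [DecidableEq P]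
section iso
variable {m : ℕ} (x₀ : P)

lemma hpred_aux (f : P ≃ Fin (m+1)) (y : P) : y ≠ x₀ ↔ f y ≠ f x₀ := by simp

/-- restriction of a linear extension to the complement of an isolated point -/
def restrEquiv (f : P ≃ Fin (m+1)) : {y : P // y ≠ x₀} ≃ Fin m :=
  (Equiv.subtypeEquiv f (hpred_aux x₀ f)).trans (finSuccAboveOrderIso (f x₀)).toEquiv.symm

lemma restrEquiv_mono (f : P ≃ Fin (m+1)) (hf : ∀ x y : P, x ≤ y → f x ≤ f y)
    (x y : {y : P // y ≠ x₀}) (hxy : x ≤ y) :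
    restrEquiv x₀ f x ≤ restrEquiv x₀ f y :=
  (finSuccAboveOrderIso (f x₀)).symm.monotone
    (show (⟨f x.1, _⟩ : {i : Fin (m+1) // i ≠ f x₀}) ≤ ⟨f y.1, _⟩ from hf x.1 y.1 hxy)

lemma succAbove_restr (f : P ≃ Fin (m+1)) (x : P) (hne : x ≠ x₀) :
    (f x₀).succAbove (restrEquiv x₀ f ⟨x, hne⟩) = f x :=
  congrArg Subtype.val
    ((finSuccAboveOrderIso (f x₀)).apply_symm_apply ⟨f x, (hpred_aux x₀ f x).mp hne⟩)

/-- rebuilding a linear extension from an isolated point position and the rest -/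
def rebuildEquiv (k : Fin (m+1)) (g : {y : P // y ≠ x₀} ≃ Fin m) : P ≃ Fin (m+1) where
  toFun x := if h : x = x₀ then k else k.succAbove (g ⟨x, h⟩)
  invFun i := if h : i = k then x₀ else (g.symm ((finSuccAboveOrderIso k).symm ⟨i, h⟩)).1
  left_inv x := by
    by_cases h : x = x₀
    · simp [h]
    · simp only [dif_neg h]
      rw [dif_neg (Fin.succAbove_ne k _)]
      have e5 : (⟨k.succAbove (g ⟨x, h⟩), Fin.succAbove_ne k _⟩ :
          {i : Fin (m+1) // i ≠ k}) = finSuccAboveOrderIso k (g ⟨x, h⟩) := rfl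
      rw [e5, OrderIso.symm_apply_apply, Equiv.symm_apply_apply]
  right_inv i := by
    by_cases h : i = k
    · simp [h]
    · simp only [dif_neg h]
      rw [dif_neg (g.symm ((finSuccAboveOrderIso k).symm ⟨i, h⟩)).2]
      rw [Equiv.apply_symm_apply]
      exact congrArg Subtype.val ((finSuccAboveOrderIso k).apply_symm_apply ⟨i, h⟩)
end iso

lemma isolated_eq (x₀ : P) (hiso : ∀ y : P, (x₀ ≤ y ∨ y ≤ x₀) → y = x₀) :
    extNum P = Fintype.card P * extNum {y : P // y ≠ x₀} := by
  classical
  have hm1 : Fintype.card P = Fintype.card {y : P // y ≠ x₀} + 1 := by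
    have h1 : Fintype.card {y : P // ¬ (y = x₀)} =
        Fintype.card P - Fintype.card {y : P // y = x₀} := Fintype.card_subtype_compl _
    have h2 : Fintype.card {y : P // y = x₀} = 1 := Fintype.card_subtype_eq x₀
    have h3 : 0 < Fintype.card P := Fintype.card_pos_iff.mpr ⟨x₀⟩
    have h4 : Fintype.card {y : P // y ≠ x₀} = Fintype.card {y : P // ¬ (y = x₀)} := rfl
    omega
  set m := Fintype.card {y : P // y ≠ x₀} with hm
  rw [extNum_eq_card hm1]
  set LEP := {f : P ≃ Fin (m+1) // ∀ x y : P, x ≤ y → f x ≤ f y} with hLEP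
  set LEQ := {g : {y : P // y ≠ x₀} ≃ Fin m //
    ∀ x y : {y : P // y ≠ x₀}, x ≤ y → g x ≤ g y} with hLEQ
  -- forward injection
  have fwd : Nat.card LEP ≤ Nat.card (Fin (m+1) × LEQ) := by
    apply Nat.card_le_card_of_injective
      (f := fun f : LEP => ((f.1 x₀ : Fin (m+1)),
        (⟨restrEquiv x₀ f.1, restrEquiv_mono x₀ f.1 f.2⟩ : LEQ)))
    rintro ⟨f, hf⟩ ⟨f', hf'⟩ h
    simp only [Prod.mk.injEq, Subtype.mk.injEq] at h
    obtain ⟨h1, h2⟩ := h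
    apply Subtype.ext
    apply Equiv.ext
    intro x
    by_cases hx : x = x₀
    · subst hx; exact h1
    · have e2 : restrEquiv x₀ f ⟨x, hx⟩ = restrEquiv x₀ f' ⟨x, hx⟩ := by rw [h2]
      have e3 := congrArg (fun i : Fin m => (f x₀).succAbove i) e2
      rw [succAbove_restr x₀ f x hx, h1, succAbove_restr x₀ f' x hx] at e3
      exact e3
  -- backward injection
  have bwd : Nat.card (Fin (m+1) × LEQ) ≤ Nat.card LEP := by
    have hmono : ∀ (p : Fin (m+1) × LEQ) (x y : P), x ≤ y →
        rebuildEquiv x₀ p.1 p.2.1 x ≤ rebuildEquiv x₀ p.1 p.2.1 y := by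
      intro p x y hxy
      by_cases hx : x = x₀
      · have : y = x₀ := hiso y (Or.inl (hx ▸ hxy))
        simp [rebuildEquiv, hx, this]
      · have hy : y ≠ x₀ := fun hy => hx (hiso x (Or.inr (hy ▸ hxy)))
        simp only [rebuildEquiv, Equiv.coe_fn_mk, dif_neg hx, dif_neg hy]
        rw [Fin.succAbove_le_succAbove_iff]
        exact p.2.2 ⟨x, hx⟩ ⟨y, hy⟩ hxy
    apply Nat.card_le_card_of_injective
      (f := fun p : Fin (m+1) × LEQ => (⟨rebuildEquiv x₀ p.1 p.2.1, hmono p⟩ : LEP))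
    rintro ⟨k, g, hg⟩ ⟨k', g', hg'⟩ h
    simp only [Subtype.mk.injEq] at h
    have h1 : ∀ x : P, rebuildEquiv x₀ k g x = rebuildEquiv x₀ k' g' x := by
      intro x; rw [h]
    have hk : k = k' := by
      have := h1 x₀
      simpa [rebuildEquiv] using this
    subst hk
    have hgg : g = g' := by
      apply Equiv.ext
      intro y
      have := h1 y.1
      simp only [rebuildEquiv, Equiv.coe_fn_mk, dif_neg y.2] at this
      exact Fin.succAbove_right_injective this
    simp [hgg]
  have heq : Nat.card LEP = Nat.card (Fin (m+1) × LEQ) := le_antisymm fwd bwd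
  rw [heq, Nat.card_prod, Nat.card_eq_fintype_card (α := Fin (m+1)), Fintype.card_fin, hm1]
  rfl

end iso2

lemma claimA : ∀ (n : ℕ) (P : Type u) [Fintype P] [PartialOrder P],
    Fintype.card P = n → (∀ x : P, ∃ y : P, y ≠ x ∧ (x ≤ y ∨ y ≤ x)) →
    extNum P ≤ Nat.factorial (n - 1) := by
  intro n
  induction n using Nat.strong_induction_on with
  | _ n IH =>
    intro P _ _ hcard hniso
    classical
    rcases Nat.eq_zero_or_pos n with h0 | hpos
    · subst h0
      have := extNum_le_fact P
      rw [hcard] at this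
      simpa using this
    by_cases hconn : ∀ x y : P, Relation.ReflTransGen (Cmp P) x y
    · have h1 := conn_bound P hconn
      rw [hcard] at h1
      have h2 : n.factorial = n * (n-1).factorial := by
        rw [← Nat.succ_pred_eq_of_pos hpos, Nat.factorial_succ]
        simp
      rw [extNum_eq_card hcard]
      exact Nat.le_of_mul_le_mul_left (by omega) hpos
    · push_neg at hconn
      obtain ⟨a, b, hab⟩ := hconn
      set S : Set P := {y | Relation.ReflTransGen (Cmp P) a y} with hS
      have hcl : ∀ x y : P, x ≤ y → (x ∈ S ↔ y ∈ S) := by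
        intro x y hxy
        constructor
        · intro hx; exact Relation.ReflTransGen.tail hx (Or.inl hxy)
        · intro hy; exact Relation.ReflTransGen.tail hy (Or.inr hxy)
      have hclC : ∀ x y : P, Cmp P x y → (x ∈ S ↔ y ∈ S) := by
        rintro x y (h | h)
        exacts [hcl x y h, (hcl y x h).symm]
      have haS : a ∈ S := Relation.ReflTransGen.refl
      have hbS : b ∉ S := hab
      set q := Fintype.card S with hq
      set qc := Fintype.card (Sᶜ : Set P) with hqc
      have hqqc : q + qc = n := by
        rw [hq, hqc, ← hcard]
        have : Fintype.card (Sᶜ : Set P) = Fintype.card P - Fintype.card S :=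
          Fintype.card_subtype_compl _
        have hle : Fintype.card S ≤ Fintype.card P := Fintype.card_subtype_le _
        omega
      -- neighbors stay on the same side
      have hnb : ∀ x : P, ∃ y : P, y ≠ x ∧ (x ≤ y ∨ y ≤ x) ∧ (x ∈ S ↔ y ∈ S) := by
        intro x
        obtain ⟨y, hy1, hy2⟩ := hniso x
        exact ⟨y, hy1, hy2, hclC x y hy2⟩
      have hq2 : 2 ≤ q := by
        obtain ⟨y, hy1, hy2, hy3⟩ := hnb a
        have h5 : 1 < Fintype.card (S : Type _) := Fintype.one_lt_card_iff.mpr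
          ⟨⟨a, haS⟩, ⟨y, hy3.mp haS⟩, fun h => hy1 (congrArg Subtype.val h).symm⟩
        omega
      have hqc2 : 2 ≤ qc := by
        obtain ⟨y, hy1, hy2, hy3⟩ := hnb b
        have h5 : 1 < Fintype.card ((Sᶜ : Set P) : Type _) := Fintype.one_lt_card_iff.mpr
          ⟨⟨b, hbS⟩, ⟨y, fun hyS => hbS (hy3.mpr hyS)⟩,
          fun h => hy1 (congrArg Subtype.val h).symm⟩
        omega
      -- no isolated on each side
      have hnisoS : ∀ x : (S : Type _), ∃ y : (S : Type _), y ≠ x ∧ (x ≤ y ∨ y ≤ x) := by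
        rintro ⟨x, hx⟩
        obtain ⟨y, hy1, hy2, hy3⟩ := hnb x
        exact ⟨⟨y, hy3.mp hx⟩, fun h => hy1 (congrArg Subtype.val h), hy2⟩
      have hnisoC : ∀ x : ((Sᶜ : Set P) : Type _),
          ∃ y : ((Sᶜ : Set P) : Type _), y ≠ x ∧ (x ≤ y ∨ y ≤ x) := by
        rintro ⟨x, hx⟩
        obtain ⟨y, hy1, hy2, hy3⟩ := hnb x
        exact ⟨⟨y, fun hyS => hx (hy3.mpr hyS)⟩, fun h => hy1 (congrArg Subtype.val h), hy2⟩
      have hS1 := IH q (by omega) (S : Type _) rfl hnisoS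
      have hS2 := IH qc (by omega) ((Sᶜ : Set P) : Type _) rfl hnisoC
      have hsplit := split_bound S hcl
      rw [hcard, ← hq] at hsplit
      -- arithmetic
      have harith : n.choose q * ((q-1).factorial * (qc-1).factorial) * (q * qc)
          = n.factorial := by
        have h1 : n.choose q * q.factorial * (n - q).factorial = n.factorial :=
          Nat.choose_mul_factorial_mul_factorial (by omega)
        have h2 : q.factorial = q * (q-1).factorial := by
          rw [← Nat.succ_pred_eq_of_pos (by omega : 0 < q), Nat.factorial_succ]; simp
        have h3 : (n - q) = qc := by omega
        have h4 : qc.factorial = qc * (qc-1).factorial := by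
          rw [← Nat.succ_pred_eq_of_pos (by omega : 0 < qc), Nat.factorial_succ]; simp
        rw [h3, h2, h4] at h1
        rw [← h1]; ring
      have hqn : n ≤ q * qc := by
        have := Nat.add_le_mul hq2 hqc2
        omega
      have hkey : extNum P * (q * qc) ≤ n.factorial := by
        calc extNum P * (q * qc)
            ≤ n.choose q * (extNum (S : Type _) * extNum ((Sᶜ : Set P) : Type _)) * (q * qc) :=
              Nat.mul_le_mul_right _ hsplit
          _ ≤ n.choose q * ((q-1).factorial * (qc-1).factorial) * (q * qc) := by
              apply Nat.mul_le_mul_right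
              exact Nat.mul_le_mul_left _ (Nat.mul_le_mul hS1 hS2)
          _ = n.factorial := harith
      have h2 : n.factorial = n * (n-1).factorial := by
        rw [← Nat.succ_pred_eq_of_pos hpos, Nat.factorial_succ]
        simp
      have : extNum P * n ≤ (n-1).factorial * n := by
        calc extNum P * n ≤ extNum P * (q * qc) := Nat.mul_le_mul_left _ hqn
          _ ≤ n.factorial := hkey
          _ = (n-1).factorial * n := by rw [h2]; ring
      exact Nat.le_of_mul_le_mul_right this hpos

lemma ceil_aux (n M : ℕ) (hn : 1 ≤ n) :
    ((M - (n-1)*M/n : ℕ) : ℤ) ≤ ⌈(M : ℚ) / (n : ℚ)⌉ := by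
  set d := (n-1)*M/n with hd
  have hdm := Nat.div_add_mod ((n-1)*M) n
  have hmd : (n-1)*M % n < n := Nat.mod_lt _ (by omega)
  have hdM : d ≤ M := by
    have h1 : (n-1)*M ≤ n*M := Nat.mul_le_mul_right M (by omega)
    have h2 : (n-1)*M/n ≤ n*M/n := Nat.div_le_div_right h1
    rwa [Nat.mul_div_cancel_left M (by omega : 0 < n)] at h2
  rw [Int.le_ceil_iff]
  have hq : (0:ℚ) < n := by exact_mod_cast Nat.pos_of_ne_zero (by omega)
  have hcast : (((M - d : ℕ) : ℤ) : ℚ) = (M : ℚ) - d := by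
    push_cast [hdM]; ring
  rw [hcast, lt_div_iff₀ hq]
  have h3 : (n:ℚ) * d + ((n-1)*M % n : ℕ) = ((n:ℚ) - 1) * M := by
    have h5 : (n:ℚ) * d + ((n-1)*M % n : ℕ) = ((n-1 : ℕ):ℚ) * M := by exact_mod_cast hdm
    rw [h5, Nat.cast_sub hn, Nat.cast_one]
  have h4 : (((n-1)*M % n : ℕ) : ℚ) < n := by exact_mod_cast hmd
  nlinarith [h3, h4]

end Aux

lemma step_div (n : ℕ) (hn : 2 ≤ n) (m : ℕ) (hm : m ∈ LEset n)
    (hbig : Nat.factorial (n-1) < m) :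
    ∃ m', m = n * m' ∧ m' ∈ LEset (n-1) := by
  classical
  obtain ⟨hpos, r, hr⟩ := hm
  have hcard : Fintype.card (Fin n) = n := Fintype.card_fin n
  by_cases hniso : ∀ x : Fin n, ∃ y : Fin n, y ≠ x ∧ (r.le x y ∨ r.le y x)
  · exfalso
    have h1 := @claimA n (Fin n) _ r hcard hniso
    rw [hr] at h1
    omega
  · push_neg at hniso
    obtain ⟨x₀, hx₀⟩ := hniso
    have hiso : ∀ y : Fin n, (r.le x₀ y ∨ r.le y x₀) → y = x₀ := by
      intro y hy
      by_contra hne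
      rcases hy with h | h
      · exact (hx₀ y hne).1 h
      · exact (hx₀ y hne).2 h
    have hkey := @isolated_eq (Fin n) _ r _ x₀ hiso
    rw [hr, hcard] at hkey
    have hsub : Fintype.card {y : Fin n // y ≠ x₀} = n - 1 := by
      have h1 : Fintype.card {y : Fin n // ¬ (y = x₀)} =
          Fintype.card (Fin n) - Fintype.card {y : Fin n // y = x₀} :=
        Fintype.card_subtype_compl _
      have h2 : Fintype.card {y : Fin n // y = x₀} = 1 := Fintype.card_subtype_eq x₀
      have h4 : Fintype.card {y : Fin n // y ≠ x₀} =
          Fintype.card {y : Fin n // ¬ (y = x₀)} := rfl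
      omega
    obtain ⟨r', hr'⟩ := transport {y : Fin n // y ≠ x₀} hsub
    exact ⟨extNum {y : Fin n // y ≠ x₀}, hkey,
      ⟨extNum_pos _, r', hr'⟩⟩


/-- For every integer `n ≥ 2`, `N(n) ≤ ⌈(n-2)!/n⌉ + N(n-1)`. -/
theorem statement9 (n : ℕ) (hn : 2 ≤ n) :
    (bigN n : ℤ) ≤ ⌈(Nat.factorial (n - 2) : ℚ) / (n : ℚ)⌉ + (bigN (n - 1) : ℤ) := by
  classical
  set a := Nat.factorial (n-1) with ha
  set M := Nat.factorial (n-2) with hM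
  have hfac : a = (n-1) * M := by
    rw [ha, hM, show n-1 = (n-2)+1 by omega, Nat.factorial_succ]
  set b := ((n-1)*M)/n with hb
  have hnfac : Nat.factorial n = n * a := by
    rw [ha, show n = (n-1)+1 by omega, Nat.factorial_succ]
    congr 1 <;> omega
  have hba : b * n ≤ a := by rw [hfac]; exact Nat.div_mul_le_self _ _
  have hbM : b ≤ M := by
    rw [hb]
    have h1 : (n-1)*M ≤ n*M := Nat.mul_le_mul_right M (by omega)
    have h2 : (n-1)*M/n ≤ n*M/n := Nat.div_le_div_right h1
    rwa [Nat.mul_div_cancel_left M (by omega : 0 < n)] at h2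
  have hMa : M ≤ a := by
    rw [hfac]
    calc M = 1 * M := (one_mul M).symm
      _ ≤ (n-1) * M := Nat.mul_le_mul_right M (by omega)
  -- main counting inequality in ℕ
  have hmain : bigN n ≤ (M - b) + bigN (n-1) := by
    have hsub : LEset n ∩ Set.Ioc a (Nat.factorial n) ⊆
        (fun m' => n * m') '' (LEset (n-1) ∩ Set.Ioc b a) := by
      rintro m ⟨hmLE, hm1, hm2⟩
      obtain ⟨m', rfl, hm'LE⟩ := step_div n hn m hmLE hm1
      refine ⟨m', ⟨hm'LE, ?_, ?_⟩, rfl⟩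
      · -- b < m'
        have h1 : b * n < n * m' := lt_of_le_of_lt hba hm1
        rw [mul_comm b n] at h1
        exact Nat.lt_of_mul_lt_mul_left h1
      · -- m' ≤ a
        rw [hnfac] at hm2
        exact Nat.le_of_mul_le_mul_left hm2 (by omega)
    have hIocfin : (Set.Ioc b a : Set ℕ).Finite := Set.finite_Ioc b a
    have hbasefin : (LEset (n-1) ∩ Set.Ioc b a).Finite :=
      hIocfin.subset Set.inter_subset_right
    have h1 : bigN n ≤ ((fun m' => n * m') '' (LEset (n-1) ∩ Set.Ioc b a)).ncard :=
      Set.ncard_le_ncard hsub (hbasefin.image _)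
    have h2 : ((fun m' => n * m') '' (LEset (n-1) ∩ Set.Ioc b a)).ncard ≤
        (LEset (n-1) ∩ Set.Ioc b a).ncard := Set.ncard_image_le hbasefin
    -- split
    have hsplit : LEset (n-1) ∩ Set.Ioc b a ⊆
        (Set.Ioc b M) ∪ (LEset (n-1) ∩ Set.Ioc M a) := by
      rintro x ⟨hx, hx1, hx2⟩
      by_cases hxM : x ≤ M
      · exact Or.inl ⟨hx1, hxM⟩
      · exact Or.inr ⟨hx, not_le.mp hxM, hx2⟩
    have h3 : (LEset (n-1) ∩ Set.Ioc b a).ncard ≤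
        (Set.Ioc b M : Set ℕ).ncard + (LEset (n-1) ∩ Set.Ioc M a).ncard := by
      calc (LEset (n-1) ∩ Set.Ioc b a).ncard
          ≤ ((Set.Ioc b M) ∪ (LEset (n-1) ∩ Set.Ioc M a)).ncard :=
            Set.ncard_le_ncard hsplit ((Set.finite_Ioc b M).union
              ((Set.finite_Ioc M a).subset Set.inter_subset_right))
        _ ≤ _ := Set.ncard_union_le _ _
    have h4 : (Set.Ioc b M : Set ℕ).ncard = M - b := by
      rw [← Finset.coe_Ioc, Set.ncard_coe_finset, Nat.card_Ioc]
    have h5 : (LEset (n-1) ∩ Set.Ioc M a).ncard = bigN (n-1) := by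
      have h6 : n - 1 - 1 = n - 2 := by omega
      simp only [bigN, h6, ← ha, ← hM]
    omega
  -- cast to ℤ and apply the ceiling bound
  have hceil := ceil_aux n M (by omega)
  rw [← hb] at hceil
  have : (bigN n : ℤ) ≤ ((M - b : ℕ) : ℤ) + (bigN (n-1) : ℤ) := by exact_mod_cast hmain
  calc (bigN n : ℤ) ≤ ((M - b : ℕ) : ℤ) + (bigN (n-1) : ℤ) := this
    _ ≤ ⌈(M : ℚ) / (n : ℚ)⌉ + (bigN (n-1) : ℤ) := by
        exact add_le_add_left hceil _
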